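/- Let x_1, x_2 ∈ ℝ^n with x_1 ≠ x_2, and let z_2 be the IDW distance function built from {x_1, x_2}. Then the midpoint x_μ = (x_1 + x_2)/2 is a stationary point of z_2, i.e. ∇z_2(x_μ) = 0. -/

import Mathlib

open scoped Classical

theorem stmt_5 {n : ℕ} (x₁ x₂ : EuclideanSpace ℝ (Fin n)) (h : x₁ ≠ x₂)
    (z : EuclideanSpace ℝ (Fin n) → ℝ)
    (hz : ∀ x, z x = if x = x₁ ∨ x = x₂ then 0
        else -(2 / Real.pi) *
          Real.arctan (1 / ((‖x - x₁‖ ^ 2)⁻¹ + (‖x - x₂‖ ^ 2)⁻¹))) :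
    HasGradientAt z 0 ((1 / 2 : ℝ) • (x₁ + x₂)) := by
  set m : EuclideanSpace ℝ (Fin n) := (1 / 2 : ℝ) • (x₁ + x₂) with hm
  have hd1 : m - x₁ = (1/2 : ℝ) • (x₂ - x₁) := by rw [hm]; module
  have hd2 : m - x₂ = (1/2 : ℝ) • (x₁ - x₂) := by rw [hm]; module
  have hm1 : m ≠ x₁ := by
    intro hc
    have h0 : (1/2 : ℝ) • (x₂ - x₁) = 0 := by rw [← hd1, hc, sub_self]
    have := (smul_eq_zero.mp h0).resolve_left (by norm_num)
    exact h (sub_eq_zero.mp this).symm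
  have hm2 : m ≠ x₂ := by
    intro hc
    have h0 : (1/2 : ℝ) • (x₁ - x₂) = 0 := by rw [← hd2, hc, sub_self]
    have := (smul_eq_zero.mp h0).resolve_left (by norm_num)
    exact h (sub_eq_zero.mp this)
  set f : EuclideanSpace ℝ (Fin n) → ℝ := fun x => -(2 / Real.pi) *
      Real.arctan (1 / ((‖x - x₁‖ ^ 2)⁻¹ + (‖x - x₂‖ ^ 2)⁻¹)) with hf
  -- z = f near m
  have hzf : z =ᶠ[nhds m] f := by
    have hopen : IsOpen ({x₁}ᶜ ∩ {x₂}ᶜ : Set (EuclideanSpace ℝ (Fin n))) :=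
      (isOpen_compl_singleton).inter isOpen_compl_singleton
    filter_upwards [hopen.mem_nhds ⟨hm1, hm2⟩] with x hx
    rw [hz x, if_neg (by push_neg; exact ⟨hx.1, hx.2⟩)]
  -- differentiability of f at m
  have hn1 : ‖m - x₁‖ ^ 2 ≠ 0 := pow_ne_zero _ (norm_ne_zero_iff.mpr (sub_ne_zero.mpr hm1))
  have hn2 : ‖m - x₂‖ ^ 2 ≠ 0 := pow_ne_zero _ (norm_ne_zero_iff.mpr (sub_ne_zero.mpr hm2))
  have hs1 : DifferentiableAt ℝ (fun x : EuclideanSpace ℝ (Fin n) => ‖x - x₁‖ ^ 2) m :=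
    DifferentiableAt.norm_sq (𝕜 := ℝ) (differentiableAt_id.sub_const x₁)
  have hs2 : DifferentiableAt ℝ (fun x : EuclideanSpace ℝ (Fin n) => ‖x - x₂‖ ^ 2) m :=
    DifferentiableAt.norm_sq (𝕜 := ℝ) (differentiableAt_id.sub_const x₂)
  have hSpos : 0 < (‖m - x₁‖ ^ 2)⁻¹ + (‖m - x₂‖ ^ 2)⁻¹ := by
    have h1 : 0 < ‖m - x₁‖ ^ 2 := lt_of_le_of_ne (by positivity) (Ne.symm hn1)
    have h2 : 0 < ‖m - x₂‖ ^ 2 := lt_of_le_of_ne (by positivity) (Ne.symm hn2)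
    positivity
  have hdf : DifferentiableAt ℝ f m := by
    rw [hf]
    simp only [one_div]
    apply DifferentiableAt.const_mul
    apply DifferentiableAt.arctan
    exact ((hs1.inv hn1).add (hs2.inv hn2)).inv (ne_of_gt hSpos)
  have hdz : DifferentiableAt ℝ z m := hzf.symm.differentiableAt_iff.mp hdf
  have hg : HasGradientAt z (gradient z m) m := hdz.hasGradientAt
  -- symmetry: z ((x₁ + x₂) - x) = z x
  have hzσ : ∀ x : EuclideanSpace ℝ (Fin n), z ((x₁ + x₂) - x) = z x := by
    intro x
    rw [hz, hz]
    have e1 : (x₁ + x₂) - x = x₁ ↔ x = x₂ := by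
      constructor <;> intro hx
      · exact (add_left_cancel (sub_eq_iff_eq_add.mp hx)).symm
      · rw [hx]; abel
    have e2 : (x₁ + x₂) - x = x₂ ↔ x = x₁ := by
      constructor <;> intro hx
      · have h' := sub_eq_iff_eq_add.mp hx
        rw [add_comm x₁ x₂] at h'
        exact (add_left_cancel h').symm
      · rw [hx]; abel
    have en1 : ‖(x₁ + x₂) - x - x₁‖ = ‖x - x₂‖ := by
      rw [show (x₁ + x₂) - x - x₁ = x₂ - x by abel, norm_sub_rev]
    have en2 : ‖(x₁ + x₂) - x - x₂‖ = ‖x - x₁‖ := by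
      rw [show (x₁ + x₂) - x - x₂ = x₁ - x by abel, norm_sub_rev]
    rw [en1, en2]; simp only [e1, e2]
    by_cases hc : x = x₁ ∨ x = x₂
    · rw [if_pos hc.symm, if_pos hc]
    · rw [if_neg (by tauto), if_neg hc, add_comm ((‖x - x₂‖ ^ 2)⁻¹)]
  -- reflection has derivative -id
  have hσm : (x₁ + x₂) - m = m := by rw [hm]; module
  have hσ : HasFDerivAt (fun x : EuclideanSpace ℝ (Fin n) => (x₁ + x₂) - x)
      (-(ContinuousLinearMap.id ℝ (EuclideanSpace ℝ (Fin n)))) m := (hasFDerivAt_id m).const_sub _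
  have hcomp : HasFDerivAt (z ∘ fun x : EuclideanSpace ℝ (Fin n) => (x₁ + x₂) - x)
      ((InnerProductSpace.toDual ℝ (EuclideanSpace ℝ (Fin n)) (gradient z m)).comp
        (-(ContinuousLinearMap.id ℝ (EuclideanSpace ℝ (Fin n))))) m := by
    apply HasFDerivAt.comp
    · rw [hσm]; exact hg.hasFDerivAt
    · exact hσ
  have hzz : (z ∘ fun x : EuclideanSpace ℝ (Fin n) => (x₁ + x₂) - x) = z := funext hzσ
  rw [hzz] at hcomp
  have hlin : (InnerProductSpace.toDual ℝ (EuclideanSpace ℝ (Fin n)) (gradient z m)).comp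
        (-(ContinuousLinearMap.id ℝ (EuclideanSpace ℝ (Fin n))))
      = InnerProductSpace.toDual ℝ (EuclideanSpace ℝ (Fin n)) (-(gradient z m)) := by
    ext v
    simp [inner_neg_left, inner_neg_right]
  rw [hlin] at hcomp
  have hneg : HasGradientAt z (-(gradient z m)) m := hasGradientAt_iff_hasFDerivAt.mpr hcomp
  have heq : gradient z m = -(gradient z m) := hg.unique hneg
  have hzero : gradient z m = 0 := by
    have h2 : (2 : ℝ) • gradient z m = 0 := by
      rw [two_smul]; nth_rewrite 2 [heq]; simp
    exact (smul_eq_zero.mp h2).resolve_left two_ne_zero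
  rw [← hzero]
  exact hg
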